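/- For the data of Construction 1, for every nonzero j ∈ (ℤ/2ℤ)⁴ with j ∉ {1000, 0100, 1100}, the class K + L_j ∈ ℤ⁵ cannot be written as a ℕ-linear (nonnegative integer) combination of the ten classes e_1, e_2, e_3, e_4, h_{12}, h_{13}, h_{14}, h_{23}, h_{24}, h_{34}; that is, K + L_j is not an effective class, encoding h⁰(K_{Y_4} + L_χ) = 0 for all characters χ ∉ {χ_{1000}, χ_{0100}, χ_{1100}}. -/

import Mathlib

open Finset

namespace DP5

/-- The Picard lattice of the del Pezzo surface `Y₄` of degree 5,
modeled as `ℤ⁵` with basis `l, e₁, e₂, e₃, e₄`. -/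
abbrev Pic : Type := Fin 5 → ℤ

def l  : Pic := ![1, 0, 0, 0, 0]
def e1 : Pic := ![0, 1, 0, 0, 0]
def e2 : Pic := ![0, 0, 1, 0, 0]
def e3 : Pic := ![0, 0, 0, 1, 0]
def e4 : Pic := ![0, 0, 0, 0, 1]

/-- The intersection form: `l·l = 1`, `eᵢ·eᵢ = -1`, mixed products `0`. -/
def inter (v w : Pic) : ℤ :=
  v 0 * w 0 - v 1 * w 1 - v 2 * w 2 - v 3 * w 3 - v 4 * w 4

def f1 : Pic := l - e1
def f2 : Pic := l - e2
def f3 : Pic := l - e3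
def f4 : Pic := l - e4

def h12 : Pic := l - e1 - e2
def h13 : Pic := l - e1 - e3
def h14 : Pic := l - e1 - e4
def h23 : Pic := l - e2 - e3
def h24 : Pic := l - e2 - e4
def h34 : Pic := l - e3 - e4

/-- The canonical class `K = -3l + e₁ + e₂ + e₃ + e₄` of `Y₄`. -/
def K : Pic := (-3 : ℤ) • l + e1 + e2 + e3 + e4

/-- Elements/characters of `(ℤ/2ℤ)⁴`, written as bit strings `σ₁σ₂σ₃σ₄`. -/
abbrev Char4 : Type := Fin 4 → ZMod 2

/-- The ten (−1)-curve classes on `Y₄`, generating the effective cone. -/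
def tenLines : Fin 10 → Pic := ![e1, e2, e3, e4, h12, h13, h14, h23, h24, h34]

/-- Construction 1: the classes `L_χ`. -/
def L1 (j : Char4) : Pic :=
  if j = ![0,0,0,1] then (2 : ℤ) • f1 + f2 - e4 else
  if j = ![0,0,1,0] then (2 : ℤ) • f2 + f3 - e4 else
  if j = ![0,1,0,0] then f1 + f2 + f3 - e4 else
  if j = ![1,0,0,0] then f1 + f2 + f3 - e4 else
  if j = ![0,0,1,1] then f1 + (2 : ℤ) • f3 - e4 else
  if j = ![0,1,0,1] then f3 + f4 else
  if j = ![0,1,1,0] then h12 + h34 else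
  if j = ![0,1,1,1] then f1 + f2 else
  if j = ![1,0,0,1] then h12 + h34 else
  if j = ![1,0,1,0] then f1 + f3 else
  if j = ![1,0,1,1] then f2 + f4 else
  if j = ![1,1,0,0] then f1 + f2 + f3 - e4 else
  if j = ![1,1,0,1] then f2 + f3 else
  if j = ![1,1,1,0] then f1 + f4 else
  if j = ![1,1,1,1] then h12 + h34 else 0

lemma sum_coords (c : Fin 10 → ℕ) :
    (∑ i : Fin 10, (c i : ℤ) • tenLines i) 0
      = c 4 + c 5 + c 6 + c 7 + c 8 + c 9 ∧
    (∑ i : Fin 10, (c i : ℤ) • tenLines i) 1 = (c 0 : ℤ) - c 4 - c 5 - c 6 ∧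
    (∑ i : Fin 10, (c i : ℤ) • tenLines i) 2 = (c 1 : ℤ) - c 4 - c 7 - c 8 ∧
    (∑ i : Fin 10, (c i : ℤ) • tenLines i) 3 = (c 2 : ℤ) - c 5 - c 7 - c 9 ∧
    (∑ i : Fin 10, (c i : ℤ) • tenLines i) 4 = (c 3 : ℤ) - c 6 - c 8 - c 9 := by
  refine ⟨?_, ?_, ?_, ?_, ?_⟩ <;>
    simp [tenLines, e1, e2, e3, e4, h12, h13, h14, h23, h24, h34, l,
      Fin.sum_univ_succ, Finset.sum_apply, Pi.smul_apply, smul_eq_mul] <;>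
    ring

set_option maxHeartbeats 2000000 in
/-- Construction 1: for every nontrivial character `χ ∉ {χ_1000, χ_0100, χ_1100}`
the class `K + L_χ` is not an ℕ-combination of the ten (−1)-curve classes,
i.e. it is not effective (so `h⁰(K + L_χ) = 0`). -/
theorem construction1_KL_not_effective (j : Char4) (hj : j ≠ 0)
    (hj' : j ∉ ([![1,0,0,0], ![0,1,0,0], ![1,1,0,0]] : List Char4)) :
    ¬ ∃ c : Fin 10 → ℕ, K + L1 j = ∑ i : Fin 10, (c i : ℤ) • tenLines i := by
  rintro ⟨c, hc⟩
  have hx : ∀ x : ZMod 2, x = 0 ∨ x = 1 := by decide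
  have hj4 : j = ![j 0, j 1, j 2, j 3] := by
    funext i; fin_cases i <;> rfl
  rcases hx (j 0) with h0 | h0 <;> rcases hx (j 1) with h1 | h1 <;>
    rcases hx (j 2) with h2 | h2 <;> rcases hx (j 3) with h3 | h3 <;>
    rw [hj4, h0, h1, h2, h3] at hc hj hj' <;>
    first
    | exact hj (by decide)
    | exact hj' (by decide)
    | · have g0 := congrFun hc 0
        have g1 := congrFun hc 1
        have g2 := congrFun hc 2
        have g3 := congrFun hc 3
        have g4 := congrFun hc 4
        simp (config := { decide := true }) [K, L1, tenLines, l, e1, e2, e3, e4,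
          f1, f2, f3, f4, h12, h13, h14, h23, h24, h34, Fin.sum_univ_succ,
          Finset.sum_apply, Pi.smul_apply, smul_eq_mul] at g0 g1 g2 g3 g4
        omega
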